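/- Let Y be a set, R a commutative unital ring, and 𝒟 a ring of subsets of Y (a family containing ∅ and closed under finite unions, finite intersections, and relative complements). Let 𝒟̂ denote the set of all ultrafilters in (𝒟, ⊆), equipped with the topology generated by the sets Ẑ := {𝔉 ∈ 𝒟̂ : Z ∈ 𝔉} for Z ∈ 𝒟. Then there exists an R-algebra isomorphism φ from Lc(𝒟̂, R), the R-algebra of locally constant R-valued functions on 𝒟̂ with compact support (pointwise operations), onto F_𝒟(Y), such that φ(1_{Ẑ}) = 1_Z for all Z ∈ 𝒟. -/

import Mathlib

/-- A filter in a family `𝒟` of sets: a nonempty subset of `𝒟` not containing `∅`,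
closed under intersections and upward closed in `𝒟`. -/
def IsFilterIn {Y : Type*} (𝒟 ξ : Set (Set Y)) : Prop :=
  ξ.Nonempty ∧ ξ ⊆ 𝒟 ∧ ∅ ∉ ξ ∧
    (∀ A ∈ ξ, ∀ B ∈ ξ, A ∩ B ∈ ξ) ∧
    (∀ A ∈ ξ, ∀ B ∈ 𝒟, A ⊆ B → B ∈ ξ)

/-- An ultrafilter in a family `𝒟` of sets: a maximal filter. -/
def IsUltrafilterIn {Y : Type*} (𝒟 ξ : Set (Set Y)) : Prop :=
  IsFilterIn 𝒟 ξ ∧ ∀ η, IsFilterIn 𝒟 η → ξ ⊆ η → η = ξ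

/-- `𝒟̂`: the space of all ultrafilters in `𝒟`. -/
def UltrafilterSpace {Y : Type*} (𝒟 : Set (Set Y)) : Type _ :=
  {F : Set (Set Y) // IsUltrafilterIn 𝒟 F}

/-- The basic set `Ẑ = {𝔉 ∈ 𝒟̂ : Z ∈ 𝔉}`. -/
def basicSet {Y : Type*} (𝒟 : Set (Set Y)) (Z : Set Y) : Set (UltrafilterSpace 𝒟) :=
  {F | Z ∈ F.1}

/-- The topology on `𝒟̂` generated by the sets `Ẑ`, `Z ∈ 𝒟`. -/
instance {Y : Type*} (𝒟 : Set (Set Y)) : TopologicalSpace (UltrafilterSpace 𝒟) :=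
  TopologicalSpace.generateFrom {U | ∃ Z ∈ 𝒟, U = basicSet 𝒟 Z}

/-- `Lc(T, R)`: the `R`-algebra of locally constant `R`-valued functions on `T` with
compact support (pointwise operations), as a non-unital subalgebra of `T → R`. -/
def lcSubalgebra (T : Type*) [TopologicalSpace T] (R : Type*) [CommRing R] :
    NonUnitalSubalgebra R (T → R) where
  carrier := {f | IsLocallyConstant f ∧ HasCompactSupport f}
  add_mem' := fun hf hg => ⟨hf.1.add hg.1, hf.2.add hg.2⟩
  zero_mem' := ⟨IsLocallyConstant.const 0, HasCompactSupport.zero⟩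
  mul_mem' := fun hf hg => ⟨hf.1.mul hg.1, hf.2.mul_right⟩
  smul_mem' := fun r f hf =>
    ⟨hf.1.comp (r • ·), hf.2.mono (Function.support_const_smul_subset r f)⟩

/-- The characteristic function of `A ⊆ X` with values in the ring `R`. -/
noncomputable def charFun {X : Type*} (R : Type*) [CommRing R] (A : Set X) : X → R :=
  A.indicator fun _ => (1 : R)

/-- `F_𝒟(Y)`: the (not necessarily unital) `R`-subalgebra of `Y → R` generated by the
characteristic functions of members of `𝒟`. -/
def charSubalgebra (Y R : Type*) [CommRing R] (𝒟 : Set (Set Y)) :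
    NonUnitalSubalgebra R (Y → R) :=
  NonUnitalAlgebra.adjoin R {f | ∃ C ∈ 𝒟, f = charFun R C}

section Lemmas

variable {Y : Type*} {𝒟 : Set (Set Y)}

namespace UFS

lemma mem_D (ξ : UltrafilterSpace 𝒟) {A : Set Y} (h : A ∈ ξ.1) : A ∈ 𝒟 := ξ.2.1.2.1 h

lemma not_empty_mem (ξ : UltrafilterSpace 𝒟) : ∅ ∉ ξ.1 := ξ.2.1.2.2.1

lemma inter_mem (ξ : UltrafilterSpace 𝒟) {A B : Set Y} (hA : A ∈ ξ.1) (hB : B ∈ ξ.1) :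
    A ∩ B ∈ ξ.1 := ξ.2.1.2.2.2.1 A hA B hB

lemma upward (ξ : UltrafilterSpace 𝒟) {A B : Set Y} (hA : A ∈ ξ.1) (hB : B ∈ 𝒟)
    (hAB : A ⊆ B) : B ∈ ξ.1 := ξ.2.1.2.2.2.2 A hA B hB hAB

lemma nonempty_of_mem (ξ : UltrafilterSpace 𝒟) {A : Set Y} (h : A ∈ ξ.1) : A.Nonempty := by
  rcases A.eq_empty_or_nonempty with rfl | hne
  · exact absurd h (not_empty_mem ξ)
  · exact hne

/-- Dichotomy for ultrafilters: if `Z ∉ ξ`, some member of `ξ` is disjoint from `Z`. -/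
lemma exists_disjoint (hinter : ∀ A ∈ 𝒟, ∀ B ∈ 𝒟, A ∩ B ∈ 𝒟)
    (ξ : UltrafilterSpace 𝒟) {Z : Set Y} (hZ : Z ∈ 𝒟) (hnot : Z ∉ ξ.1) :
    ∃ W ∈ ξ.1, W ∩ Z = ∅ := by
  by_contra hcon
  push_neg at hcon
  set η : Set (Set Y) := {B ∈ 𝒟 | ∃ W ∈ ξ.1, W ∩ Z ⊆ B} with hη
  obtain ⟨A, hA⟩ := ξ.2.1.1
  have hZη : Z ∈ η := ⟨hZ, A, hA, Set.inter_subset_right⟩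
  have hηfil : IsFilterIn 𝒟 η := by
    refine ⟨⟨Z, hZη⟩, fun B hB => hB.1, ?_, ?_, ?_⟩
    · rintro ⟨-, W, hW, hsub⟩
      exact (hcon W hW).ne_empty (Set.subset_empty_iff.mp hsub)
    · rintro B₁ ⟨hB₁, W₁, hW₁, hs₁⟩ B₂ ⟨hB₂, W₂, hW₂, hs₂⟩
      refine ⟨hinter _ hB₁ _ hB₂, W₁ ∩ W₂, inter_mem ξ hW₁ hW₂, ?_⟩
      intro x hx
      exact ⟨hs₁ ⟨hx.1.1, hx.2⟩, hs₂ ⟨hx.1.2, hx.2⟩⟩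
    · rintro B₁ ⟨hB₁, W, hW, hs⟩ B₂ hB₂ hsub
      exact ⟨hB₂, W, hW, hs.trans hsub⟩
  have hsub : ξ.1 ⊆ η := fun W hW =>
    ⟨mem_D ξ hW, W, hW, Set.inter_subset_left⟩
  have := ξ.2.2 η hηfil hsub
  exact hnot (this ▸ hZη)

lemma union_mem_iff (hinter : ∀ A ∈ 𝒟, ∀ B ∈ 𝒟, A ∩ B ∈ 𝒟)
    (hunion : ∀ A ∈ 𝒟, ∀ B ∈ 𝒟, A ∪ B ∈ 𝒟)
    (ξ : UltrafilterSpace 𝒟) {A B : Set Y} (hA : A ∈ 𝒟) (hB : B ∈ 𝒟) :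
    A ∪ B ∈ ξ.1 ↔ A ∈ ξ.1 ∨ B ∈ ξ.1 := by
  constructor
  · intro h
    by_contra hc
    push_neg at hc
    obtain ⟨W₁, hW₁, hd₁⟩ := exists_disjoint hinter ξ hA hc.1
    obtain ⟨W₂, hW₂, hd₂⟩ := exists_disjoint hinter ξ hB hc.2
    have hmem : (W₁ ∩ W₂) ∩ (A ∪ B) ∈ ξ.1 :=
      inter_mem ξ (inter_mem ξ hW₁ hW₂) h
    have : (W₁ ∩ W₂) ∩ (A ∪ B) = ∅ := by
      ext x
      simp only [Set.mem_inter_iff, Set.mem_union, Set.mem_empty_iff_false, iff_false]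
      rintro ⟨⟨h1, h2⟩, h3 | h3⟩
      · exact absurd (Set.mem_inter h1 h3) (by rw [hd₁]; exact id)
      · exact absurd (Set.mem_inter h2 h3) (by rw [hd₂]; exact id)
    exact not_empty_mem ξ (this ▸ hmem)
  · rintro (h | h)
    · exact upward ξ h (hunion _ hA _ hB) Set.subset_union_left
    · exact upward ξ h (hunion _ hA _ hB) Set.subset_union_right

lemma diff_mem_iff (hinter : ∀ A ∈ 𝒟, ∀ B ∈ 𝒟, A ∩ B ∈ 𝒟)
    (hdiff : ∀ A ∈ 𝒟, ∀ B ∈ 𝒟, A \ B ∈ 𝒟)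
    (ξ : UltrafilterSpace 𝒟) {A B : Set Y} (hA : A ∈ 𝒟) (hB : B ∈ 𝒟) :
    A \ B ∈ ξ.1 ↔ A ∈ ξ.1 ∧ B ∉ ξ.1 := by
  constructor
  · intro h
    refine ⟨upward ξ h hA Set.diff_subset, fun hBm => ?_⟩
    have hmem : (A \ B) ∩ B ∈ ξ.1 := inter_mem ξ h hBm
    rw [Set.diff_inter_self] at hmem
    exact not_empty_mem ξ hmem
  · rintro ⟨hAm, hBn⟩
    obtain ⟨W, hW, hd⟩ := exists_disjoint hinter ξ hB hBn
    refine upward ξ (inter_mem ξ hW hAm) (hdiff _ hA _ hB) ?_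
    intro x hx
    refine ⟨hx.2, fun hxB => ?_⟩
    have : x ∈ W ∩ B := ⟨hx.1, hxB⟩
    rw [hd] at this
    exact this

lemma basicSet_empty : basicSet 𝒟 (∅ : Set Y) = ∅ := by
  ext ξ
  simp only [basicSet, Set.mem_setOf_eq, Set.mem_empty_iff_false, iff_false]
  exact not_empty_mem ξ

lemma basicSet_inter (ξ : UltrafilterSpace 𝒟) {A B : Set Y} (hA : A ∈ 𝒟) (hB : B ∈ 𝒟) :
    ξ ∈ basicSet 𝒟 (A ∩ B) ↔ ξ ∈ basicSet 𝒟 A ∧ ξ ∈ basicSet 𝒟 B := by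
  simp only [basicSet, Set.mem_setOf_eq]
  constructor
  · intro h
    exact ⟨upward ξ h hA Set.inter_subset_left, upward ξ h hB Set.inter_subset_right⟩
  · rintro ⟨h1, h2⟩
    exact inter_mem ξ h1 h2

lemma basicSet_mem_basis {Z : Set Y} (hZ : Z ∈ 𝒟) :
    basicSet 𝒟 Z ∈ {U | ∃ Z ∈ 𝒟, U = basicSet 𝒟 Z} := ⟨Z, hZ, rfl⟩

lemma isBasis (hinter : ∀ A ∈ 𝒟, ∀ B ∈ 𝒟, A ∩ B ∈ 𝒟) :
    TopologicalSpace.IsTopologicalBasis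
      {U : Set (UltrafilterSpace 𝒟) | ∃ Z ∈ 𝒟, U = basicSet 𝒟 Z} := by
  refine ⟨?_, ?_, rfl⟩
  · rintro t₁ ⟨A, hA, rfl⟩ t₂ ⟨B, hB, rfl⟩ ξ hξ
    refine ⟨basicSet 𝒟 (A ∩ B), ⟨A ∩ B, hinter _ hA _ hB, rfl⟩, ?_, ?_⟩
    · exact (basicSet_inter ξ hA hB).mpr ⟨hξ.1, hξ.2⟩
    · intro η hη
      exact (basicSet_inter η hA hB).mp hη
  · apply Set.eq_univ_of_forall
    intro ξ
    obtain ⟨A, hA⟩ := ξ.2.1.1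
    exact ⟨basicSet 𝒟 A, ⟨A, mem_D ξ hA, rfl⟩, hA⟩

lemma isOpen_basicSet (hinter : ∀ A ∈ 𝒟, ∀ B ∈ 𝒟, A ∩ B ∈ 𝒟) {Z : Set Y} (hZ : Z ∈ 𝒟) :
    IsOpen (basicSet 𝒟 Z) := (isBasis hinter).isOpen (basicSet_mem_basis hZ)

lemma isClosed_basicSet (hinter : ∀ A ∈ 𝒟, ∀ B ∈ 𝒟, A ∩ B ∈ 𝒟) {Z : Set Y} (hZ : Z ∈ 𝒟) :
    IsClosed (basicSet 𝒟 Z) := by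
  rw [← isOpen_compl_iff]
  rw [isOpen_iff_forall_mem_open]
  intro ξ hξ
  obtain ⟨W, hW, hd⟩ := exists_disjoint hinter ξ hZ hξ
  refine ⟨basicSet 𝒟 W, ?_, isOpen_basicSet hinter (mem_D ξ hW), hW⟩
  intro η hη hηZ
  have : W ∩ Z ∈ η.1 := inter_mem η hη hηZ
  rw [hd] at this
  exact not_empty_mem η this

/-- Every filter extends to an ultrafilter (Zorn). -/
lemma exists_ultrafilter_ge {ξ₀ : Set (Set Y)} (h₀ : IsFilterIn 𝒟 ξ₀) :
    ∃ ξ, IsUltrafilterIn 𝒟 ξ ∧ ξ₀ ⊆ ξ := by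
  have hz : ∀ c ⊆ {η | IsFilterIn 𝒟 η}, IsChain (· ⊆ ·) c → c.Nonempty →
      ∃ ub ∈ {η | IsFilterIn 𝒟 η}, ∀ s ∈ c, s ⊆ ub := by
    intro c hcS hchain hcne
    refine ⟨⋃₀ c, ?_, fun s hs => Set.subset_sUnion_of_mem hs⟩
    obtain ⟨η₀, hη₀⟩ := hcne
    obtain ⟨A, hA⟩ := (hcS hη₀).1
    refine ⟨⟨A, η₀, hη₀, hA⟩, ?_, ?_, ?_, ?_⟩
    · rintro B ⟨η, hη, hB⟩
      exact (hcS hη).2.1 hB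
    · rintro ⟨η, hη, hB⟩
      exact (hcS hη).2.2.1 hB
    · rintro B₁ ⟨η₁, hη₁, hB₁⟩ B₂ ⟨η₂, hη₂, hB₂⟩
      rcases hchain.total hη₁ hη₂ with h | h
      · exact ⟨η₂, hη₂, (hcS hη₂).2.2.2.1 _ (h hB₁) _ hB₂⟩
      · exact ⟨η₁, hη₁, (hcS hη₁).2.2.2.1 _ hB₁ _ (h hB₂)⟩
    · rintro B₁ ⟨η, hη, hB₁⟩ B₂ hB₂ hsub
      exact ⟨η, hη, (hcS hη).2.2.2.2 _ hB₁ _ hB₂ hsub⟩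
  obtain ⟨m, hm₀, hmax⟩ := zorn_subset_nonempty {η | IsFilterIn 𝒟 η} hz ξ₀ h₀
  exact ⟨m, ⟨hmax.1, fun η hη hsub => subset_antisymm (hmax.2 hη hsub) hsub⟩, hm₀⟩

lemma finsetUnion_mem_D (hempty : ∅ ∈ 𝒟) (hunion : ∀ A ∈ 𝒟, ∀ B ∈ 𝒟, A ∪ B ∈ 𝒟)
    {ι : Type*} [DecidableEq ι] (W : ι → Set Y) (hW : ∀ i, W i ∈ 𝒟) (t : Finset ι) :
    (⋃ i ∈ t, W i) ∈ 𝒟 := by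
  induction t using Finset.induction_on with
  | empty => simpa using hempty
  | @insert i t hi ih =>
    rw [Finset.set_biUnion_insert]
    exact hunion _ (hW _) _ ih

lemma exists_mem_of_subset_finsetUnion
    (hinter : ∀ A ∈ 𝒟, ∀ B ∈ 𝒟, A ∩ B ∈ 𝒟)
    (hunion : ∀ A ∈ 𝒟, ∀ B ∈ 𝒟, A ∪ B ∈ 𝒟) (hempty : ∅ ∈ 𝒟)
    (ξ : UltrafilterSpace 𝒟) {ι : Type*} [DecidableEq ι]
    (W : ι → Set Y) (hW : ∀ i, W i ∈ 𝒟) (t : Finset ι) :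
    ∀ V ∈ ξ.1, V ⊆ (⋃ i ∈ t, W i) → ∃ i ∈ t, W i ∈ ξ.1 := by
  induction t using Finset.induction_on with
  | empty =>
    intro V hV hsub
    simp only [Finset.notMem_empty, Set.iUnion_of_empty, Set.iUnion_empty,
      Set.subset_empty_iff] at hsub
    exact absurd (hsub ▸ hV) (not_empty_mem ξ)
  | @insert i t hi ih =>
    intro V hV hsub
    rw [Finset.set_biUnion_insert] at hsub
    have hmem : W i ∪ (⋃ j ∈ t, W j) ∈ ξ.1 :=
      upward ξ hV (hunion _ (hW i) _ (finsetUnion_mem_D hempty hunion W hW t)) hsub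
    rcases (union_mem_iff hinter hunion ξ (hW i) (finsetUnion_mem_D hempty hunion W hW t)).mp
        hmem with h | h
    · exact ⟨i, Finset.mem_insert_self i t, h⟩
    · obtain ⟨j, hj, hjm⟩ := ih _ h Set.Subset.rfl
      exact ⟨j, Finset.mem_insert_of_mem hj, hjm⟩

lemma basic_cover_finite (hempty : ∅ ∈ 𝒟)
    (hunion : ∀ A ∈ 𝒟, ∀ B ∈ 𝒟, A ∪ B ∈ 𝒟)
    (hinter : ∀ A ∈ 𝒟, ∀ B ∈ 𝒟, A ∩ B ∈ 𝒟)
    (hdiff : ∀ A ∈ 𝒟, ∀ B ∈ 𝒟, A \ B ∈ 𝒟)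
    {Z : Set Y} (hZ : Z ∈ 𝒟) {ι : Type*} (W : ι → Set Y) (hW : ∀ i, W i ∈ 𝒟)
    (hcov : basicSet 𝒟 Z ⊆ ⋃ i, basicSet 𝒟 (W i)) :
    ∃ t : Finset ι, basicSet 𝒟 Z ⊆ ⋃ i ∈ t, basicSet 𝒟 (W i) := by
  classical
  by_contra hcon
  push_neg at hcon
  -- every finite difference is nonempty
  have hne : ∀ t : Finset ι, (Z \ ⋃ i ∈ t, W i).Nonempty := by
    intro t
    rw [Set.nonempty_iff_ne_empty]
    intro hemp
    apply hcon t
    intro ξ hξ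
    have hsub : Z ⊆ ⋃ i ∈ t, W i := by
      rw [Set.diff_eq_empty] at hemp; exact hemp
    obtain ⟨i, hi, him⟩ :=
      exists_mem_of_subset_finsetUnion hinter hunion hempty ξ W hW t Z hξ hsub
    exact Set.mem_biUnion hi him
  set ξ₀ : Set (Set Y) := {B ∈ 𝒟 | ∃ t : Finset ι, Z \ ⋃ i ∈ t, W i ⊆ B} with hξ₀
  have hDdiff : ∀ t : Finset ι, (Z \ ⋃ i ∈ t, W i) ∈ 𝒟 :=
    fun t => hdiff _ hZ _ (finsetUnion_mem_D hempty hunion W hW t)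
  have hfil : IsFilterIn 𝒟 ξ₀ := by
    refine ⟨⟨Z, hZ, ∅, by simpa using Set.diff_subset⟩, fun B hB => hB.1, ?_, ?_, ?_⟩
    · rintro ⟨-, t, hsub⟩
      exact (hne t).ne_empty (Set.subset_empty_iff.mp hsub)
    · rintro B₁ ⟨hB₁, t₁, hs₁⟩ B₂ ⟨hB₂, t₂, hs₂⟩
      refine ⟨hinter _ hB₁ _ hB₂, t₁ ∪ t₂, ?_⟩
      intro x hx
      refine ⟨hs₁ ⟨hx.1, fun hm => hx.2 ?_⟩, hs₂ ⟨hx.1, fun hm => hx.2 ?_⟩⟩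
      · obtain ⟨i, hi, hxi⟩ := Set.mem_iUnion₂.mp hm  -- might not exist; fix
        exact Set.mem_biUnion (Finset.mem_union_left _ hi) hxi
      · obtain ⟨i, hi, hxi⟩ := Set.mem_iUnion₂.mp hm
        exact Set.mem_biUnion (Finset.mem_union_right _ hi) hxi
    · rintro B₁ ⟨hB₁, t, hs⟩ B₂ hB₂ hsub
      exact ⟨hB₂, t, hs.trans hsub⟩
  obtain ⟨ξs, hξuf, hξge⟩ := exists_ultrafilter_ge hfil
  set ξ : UltrafilterSpace 𝒟 := ⟨ξs, hξuf⟩ with hξdef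
  have hZξ : Z ∈ ξ.1 := hξge ⟨hZ, ∅, by simpa using Set.diff_subset⟩
  have hcv : ξ ∈ ⋃ i, basicSet 𝒟 (W i) := hcov hZξ
  obtain ⟨i, him⟩ := Set.mem_iUnion.mp hcv
  have hdm : Z \ W i ∈ ξ.1 := by
    refine hξge ⟨hdiff _ hZ _ (hW i), {i}, ?_⟩
    simp
  have : (Z \ W i) ∩ W i ∈ ξ.1 := inter_mem ξ hdm him
  rw [Set.diff_inter_self] at this
  exact not_empty_mem ξ this

lemma isCompact_basicSet (hempty : ∅ ∈ 𝒟)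
    (hunion : ∀ A ∈ 𝒟, ∀ B ∈ 𝒟, A ∪ B ∈ 𝒟)
    (hinter : ∀ A ∈ 𝒟, ∀ B ∈ 𝒟, A ∩ B ∈ 𝒟)
    (hdiff : ∀ A ∈ 𝒟, ∀ B ∈ 𝒟, A \ B ∈ 𝒟)
    {Z : Set Y} (hZ : Z ∈ 𝒟) : IsCompact (basicSet 𝒟 Z) := by
  classical
  refine isCompact_of_finite_subcover ?_
  intro ι U hUo hcov
  -- choose for each point of Ẑ a basic neighbourhood inside some U i
  have hch : ∀ ξ : UltrafilterSpace 𝒟, ξ ∈ basicSet 𝒟 Z →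
      ∃ W, W ∈ 𝒟 ∧ ξ ∈ basicSet 𝒟 W ∧ ∃ i, basicSet 𝒟 W ⊆ U i := by
    intro ξ hξ
    obtain ⟨i, hi⟩ := Set.mem_iUnion.mp (hcov hξ)
    obtain ⟨V, ⟨W, hWD, rfl⟩, hξV, hVU⟩ :=
      (isBasis hinter).exists_subset_of_mem_open hi (hUo i)
    exact ⟨W, hWD, hξV, i, hVU⟩
  -- index by points of the basic set
  let P := {ξ : UltrafilterSpace 𝒟 // ξ ∈ basicSet 𝒟 Z}
  have hW : ∀ p : P, ∃ W, W ∈ 𝒟 ∧ p.1 ∈ basicSet 𝒟 W ∧ ∃ i, basicSet 𝒟 W ⊆ U i :=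
    fun p => hch p.1 p.2
  choose Wf hWD hWmem hWsub using hW
  have hcov' : basicSet 𝒟 Z ⊆ ⋃ p : P, basicSet 𝒟 (Wf p) := by
    intro ξ hξ
    exact Set.mem_iUnion.mpr ⟨⟨ξ, hξ⟩, hWmem ⟨ξ, hξ⟩⟩
  obtain ⟨t, ht⟩ := basic_cover_finite hempty hunion hinter hdiff hZ Wf hWD hcov'
  choose idx hidx using hWsub
  refine ⟨t.image idx, ?_⟩
  intro ξ hξ
  obtain ⟨p, hp, hpm⟩ := Set.mem_iUnion₂.mp (ht hξ)
  exact Set.mem_biUnion (Finset.mem_image_of_mem idx hp) (hidx p hpm)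

variable {R : Type*} [CommRing R]

lemma charFun_apply_mem {X : Type*} (A : Set X) {x : X} (h : x ∈ A) :
    charFun R A x = 1 := by simp [charFun, Set.indicator_of_mem h]

lemma charFun_apply_not_mem {X : Type*} (A : Set X) {x : X} (h : x ∉ A) :
    charFun R A x = 0 := by simp [charFun, Set.indicator_of_notMem h]

lemma isLocallyConstant_charFun {T : Type*} [TopologicalSpace T] {A : Set T}
    (ho : IsOpen A) (hc : IsClosed A) : IsLocallyConstant (charFun R A) := by
  classical
  intro s
  have : charFun R A ⁻¹' s =
      (if (1 : R) ∈ s then A else ∅) ∪ (if (0 : R) ∈ s then Aᶜ else ∅) := by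
    ext x
    by_cases hx : x ∈ A
    · simp only [Set.mem_preimage, charFun_apply_mem A hx, Set.mem_union]
      by_cases h1 : (1 : R) ∈ s <;> by_cases h0 : (0 : R) ∈ s <;>
        simp [h1, h0, hx]
    · simp only [Set.mem_preimage, charFun_apply_not_mem A hx, Set.mem_union]
      by_cases h1 : (1 : R) ∈ s <;> by_cases h0 : (0 : R) ∈ s <;>
        simp [h1, h0, hx]
  rw [this]
  apply IsOpen.union <;> split <;>
    simp [ho, hc.isOpen_compl, isOpen_empty]

lemma charFun_basicSet_mem_lc (hempty : ∅ ∈ 𝒟)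
    (hunion : ∀ A ∈ 𝒟, ∀ B ∈ 𝒟, A ∪ B ∈ 𝒟)
    (hinter : ∀ A ∈ 𝒟, ∀ B ∈ 𝒟, A ∩ B ∈ 𝒟)
    (hdiff : ∀ A ∈ 𝒟, ∀ B ∈ 𝒟, A \ B ∈ 𝒟)
    {Z : Set Y} (hZ : Z ∈ 𝒟) :
    charFun R (basicSet 𝒟 Z) ∈ lcSubalgebra (UltrafilterSpace 𝒟) R := by
  refine ⟨isLocallyConstant_charFun (isOpen_basicSet hinter hZ)
      (isClosed_basicSet hinter hZ), ?_⟩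
  have hsupp : Function.support (charFun R (basicSet 𝒟 Z)) ⊆ basicSet 𝒟 Z := by
    intro ξ hξ
    by_contra hc
    exact hξ (charFun_apply_not_mem _ hc)
  exact (isCompact_basicSet hempty hunion hinter hdiff hZ).of_isClosed_subset
    isClosed_closure
    (closure_minimal hsupp (isClosed_basicSet hinter hZ))

/-- The principal ultrafilter at a covered point. -/
lemma principal_isUltrafilter (hinter : ∀ A ∈ 𝒟, ∀ B ∈ 𝒟, A ∩ B ∈ 𝒟)
    (hdiff : ∀ A ∈ 𝒟, ∀ B ∈ 𝒟, A \ B ∈ 𝒟)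
    {y : Y} (h : ∃ Z ∈ 𝒟, y ∈ Z) :
    IsUltrafilterIn 𝒟 {Z ∈ 𝒟 | y ∈ Z} := by
  obtain ⟨Z₀, hZ₀D, hyZ₀⟩ := h
  constructor
  · refine ⟨⟨Z₀, hZ₀D, hyZ₀⟩, fun B hB => hB.1, ?_, ?_, ?_⟩
    · rintro ⟨-, h⟩; exact h
    · rintro A ⟨hA, hyA⟩ B ⟨hB, hyB⟩
      exact ⟨hinter _ hA _ hB, hyA, hyB⟩
    · rintro A ⟨hA, hyA⟩ B hB hsub
      exact ⟨hB, hsub hyA⟩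
  · intro η hη hsub
    apply subset_antisymm _ hsub
    intro W hW
    refine ⟨hη.2.1 hW, ?_⟩
    by_contra hyW
    have hdm : Z₀ \ W ∈ η := hsub ⟨hdiff _ hZ₀D _ (hη.2.1 hW), hyZ₀, hyW⟩
    have : (Z₀ \ W) ∩ W ∈ η := hη.2.2.2.1 _ hdm _ hW
    rw [Set.diff_inter_self] at this
    exact hη.2.2.1 this

/-- Functions constant on finitely many basic sets and vanishing elsewhere lie in the
span of the basic characteristic functions. -/
lemma span_of_list (hinter : ∀ A ∈ 𝒟, ∀ B ∈ 𝒟, A ∩ B ∈ 𝒟)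
    (hdiff : ∀ A ∈ 𝒟, ∀ B ∈ 𝒟, A \ B ∈ 𝒟) :
    ∀ (n : ℕ) (L : List (Set Y)), L.length = n → (∀ Z ∈ L, Z ∈ 𝒟) →
    ∀ f : UltrafilterSpace 𝒟 → R,
      (∀ Z ∈ L, ∃ c : R, ∀ ξ ∈ basicSet 𝒟 Z, f ξ = c) →
      (∀ ξ, (∀ Z ∈ L, ξ ∉ basicSet 𝒟 Z) → f ξ = 0) →
      f ∈ Submodule.span R
        {g : UltrafilterSpace 𝒟 → R | ∃ Z ∈ 𝒟, g = charFun R (basicSet 𝒟 Z)} := by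
  intro n
  induction n with
  | zero =>
    intro L hlen hD f hconst hvan
    rw [List.length_eq_zero_iff] at hlen
    subst hlen
    have : f = 0 := funext fun ξ => hvan ξ (by simp)
    rw [this]
    exact Submodule.zero_mem _
  | succ n ih =>
    intro L hlen hD f hconst hvan
    match L with
    | Z :: L' =>
    have hZD : Z ∈ 𝒟 := hD Z List.mem_cons_self
    obtain ⟨c, hc⟩ := hconst Z List.mem_cons_self
    set g : UltrafilterSpace 𝒟 → R :=
      fun ξ => f ξ - c • charFun R (basicSet 𝒟 Z) ξ with hg
    have hgspan : g ∈ Submodule.span R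
        {g : UltrafilterSpace 𝒟 → R | ∃ Z ∈ 𝒟, g = charFun R (basicSet 𝒟 Z)} := by
      refine ih (L'.map (fun W => W \ Z)) (by simpa using Nat.succ_injective hlen) ?_ g ?_ ?_
      · intro W hW
        obtain ⟨W', hW', rfl⟩ := List.mem_map.mp hW
        exact hdiff _ (hD _ (List.mem_cons_of_mem _ hW')) _ hZD
      · intro W hW
        obtain ⟨W', hW', rfl⟩ := List.mem_map.mp hW
        obtain ⟨cW, hcW⟩ := hconst W' (List.mem_cons_of_mem _ hW')
        refine ⟨cW, fun ξ hξ => ?_⟩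
        have hWD' : W' ∈ 𝒟 := hD _ (List.mem_cons_of_mem _ hW')
        have hmem := (diff_mem_iff hinter hdiff ξ hWD' hZD).mp hξ
        have h1 : f ξ = cW := hcW ξ (upward ξ hξ hWD' Set.diff_subset)
        have h2 : charFun R (basicSet 𝒟 Z) ξ = 0 :=
          charFun_apply_not_mem _ hmem.2
        simp [hg, h1, h2]
      · intro ξ hξ
        by_cases hZξ : ξ ∈ basicSet 𝒟 Z
        · have h1 : f ξ = c := hc ξ hZξ
          have h2 : charFun R (basicSet 𝒟 Z) ξ = 1 := charFun_apply_mem _ hZξ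
          simp [hg, h1, h2]
        · have hfz : f ξ = 0 := by
            apply hvan ξ
            intro V hV
            rcases List.mem_cons.mp hV with rfl | hV'
            · exact hZξ
            · intro hVξ
              exact hξ (V \ Z) (List.mem_map.mpr ⟨V, hV', rfl⟩)
                ((diff_mem_iff hinter hdiff ξ (hD _ (List.mem_cons_of_mem _ hV')) hZD).mpr
                  ⟨hVξ, hZξ⟩)
          have h2 : charFun R (basicSet 𝒟 Z) ξ = 0 := charFun_apply_not_mem _ hZξ
          simp [hg, hfz, h2]
    have hfeq : f = g + c • charFun R (basicSet 𝒟 Z) := by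
      funext ξ
      simp [hg]
    rw [hfeq]
    exact Submodule.add_mem _ hgspan
      (Submodule.smul_mem _ c (Submodule.subset_span ⟨Z, hZD, rfl⟩))

/-- Decomposition: every locally constant compactly supported function is in the span of
characteristic functions of basic sets. -/
lemma lc_mem_span (hempty : ∅ ∈ 𝒟)
    (hunion : ∀ A ∈ 𝒟, ∀ B ∈ 𝒟, A ∪ B ∈ 𝒟)
    (hinter : ∀ A ∈ 𝒟, ∀ B ∈ 𝒟, A ∩ B ∈ 𝒟)
    (hdiff : ∀ A ∈ 𝒟, ∀ B ∈ 𝒟, A \ B ∈ 𝒟)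
    {f : UltrafilterSpace 𝒟 → R} (hf : f ∈ lcSubalgebra (UltrafilterSpace 𝒟) R) :
    f ∈ Submodule.span R
      {g : UltrafilterSpace 𝒟 → R | ∃ Z ∈ 𝒟, g = charFun R (basicSet 𝒟 Z)} := by
  classical
  obtain ⟨hlc, hcs⟩ := hf
  have hch : ∀ ξ : UltrafilterSpace 𝒟, ∃ Z, Z ∈ 𝒟 ∧ ξ ∈ basicSet 𝒟 Z ∧
      ∀ η ∈ basicSet 𝒟 Z, f η = f ξ := by
    intro ξ
    obtain ⟨U, hUo, hξU, hcst⟩ := hlc.exists_open ξ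
    obtain ⟨V, ⟨Z, hZD, rfl⟩, hξV, hVU⟩ :=
      (isBasis hinter).exists_subset_of_mem_open hξU hUo
    exact ⟨Z, hZD, hξV, fun η hη => hcst η (hVU hη)⟩
  choose Zc hZcD hZcmem hZcconst using hch
  obtain ⟨t, -, ht⟩ := hcs.elim_nhds_subcover (fun ξ => basicSet 𝒟 (Zc ξ))
    (fun ξ _ => (isOpen_basicSet hinter (hZcD ξ)).mem_nhds (hZcmem ξ))
  refine span_of_list hinter hdiff _ (t.toList.map Zc) rfl ?_ f ?_ ?_
  · intro Z hZ
    obtain ⟨ξ, -, rfl⟩ := List.mem_map.mp hZ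
    exact hZcD ξ
  · intro Z hZ
    obtain ⟨ξ, -, rfl⟩ := List.mem_map.mp hZ
    exact ⟨f ξ, hZcconst ξ⟩
  · intro η hη
    by_contra hfη
    have hηs : η ∈ closure (Function.support f) :=
      subset_closure (by simpa [Function.mem_support] using hfη)
    obtain ⟨ξ, hξt, hξm⟩ := Set.mem_iUnion₂.mp (ht hηs)
    exact hη (Zc ξ) (List.mem_map.mpr ⟨ξ, Finset.mem_toList.mpr hξt, rfl⟩) hξm

end UFS

end Lemmas

open UFS in
/-- If `𝒟` is a ring of subsets of `Y`, then there is an `R`-algebra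
isomorphism `φ : Lc(𝒟̂, R) → F_𝒟(Y)` with `φ(1_Ẑ) = 1_Z` for all `Z ∈ 𝒟`. -/
theorem lc_ultrafilterSpace_iso_charSubalgebra
    (Y R : Type*) [CommRing R] (𝒟 : Set (Set Y))
    (hempty : ∅ ∈ 𝒟)
    (hunion : ∀ A ∈ 𝒟, ∀ B ∈ 𝒟, A ∪ B ∈ 𝒟)
    (hinter : ∀ A ∈ 𝒟, ∀ B ∈ 𝒟, A ∩ B ∈ 𝒟)
    (hdiff : ∀ A ∈ 𝒟, ∀ B ∈ 𝒟, A \ B ∈ 𝒟) :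
    ∃ φ : lcSubalgebra (UltrafilterSpace 𝒟) R →ₙₐ[R] charSubalgebra Y R 𝒟,
      Function.Bijective φ ∧
      ∀ Z ∈ 𝒟, ∃ hZ : charFun R (basicSet 𝒟 Z) ∈ lcSubalgebra (UltrafilterSpace 𝒟) R,
        (φ ⟨charFun R (basicSet 𝒟 Z), hZ⟩ : Y → R) = charFun R Z := by
  classical
  set φ₀ : (UltrafilterSpace 𝒟 → R) → (Y → R) :=
    fun f y => if h : ∃ Z ∈ 𝒟, y ∈ Z then
      f ⟨{Z ∈ 𝒟 | y ∈ Z}, principal_isUltrafilter hinter hdiff h⟩ else 0 with hφ₀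
  have hadd : ∀ f g, φ₀ (f + g) = φ₀ f + φ₀ g := by
    intro f g; funext y
    by_cases h : ∃ Z ∈ 𝒟, y ∈ Z <;> simp [hφ₀, h] <;> rfl
  have hsmul : ∀ (r : R) f, φ₀ (r • f) = r • φ₀ f := by
    intro r f; funext y
    by_cases h : ∃ Z ∈ 𝒟, y ∈ Z <;> simp [hφ₀, h] <;> rfl
  have hmul : ∀ f g, φ₀ (f * g) = φ₀ f * φ₀ g := by
    intro f g; funext y
    by_cases h : ∃ Z ∈ 𝒟, y ∈ Z <;> simp [hφ₀, h] <;> rfl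
  have hzero : φ₀ 0 = 0 := by
    funext y
    by_cases h : ∃ Z ∈ 𝒟, y ∈ Z <;> simp [hφ₀, h] <;> rfl
  have hkey : ∀ Z ∈ 𝒟, φ₀ (charFun R (basicSet 𝒟 Z)) = charFun R Z := by
    intro Z hZ
    funext y
    by_cases h : ∃ Z' ∈ 𝒟, y ∈ Z'
    · by_cases hyZ : y ∈ Z
      · have hm : (⟨{Z' ∈ 𝒟 | y ∈ Z'}, principal_isUltrafilter hinter hdiff h⟩ :
            UltrafilterSpace 𝒟) ∈ basicSet 𝒟 Z := ⟨hZ, hyZ⟩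
        simp [hφ₀, h, charFun_apply_mem _ hm, charFun_apply_mem _ hyZ]
        exact charFun_apply_mem _ hm
      · have hm : (⟨{Z' ∈ 𝒟 | y ∈ Z'}, principal_isUltrafilter hinter hdiff h⟩ :
            UltrafilterSpace 𝒟) ∉ basicSet 𝒟 Z := fun hc => hyZ hc.2
        simp [hφ₀, h, charFun_apply_not_mem _ hm, charFun_apply_not_mem _ hyZ]
        exact charFun_apply_not_mem _ hm
    · have hyZ : y ∉ Z := fun hc => h ⟨Z, hZ, hc⟩
      simp [hφ₀, h, charFun_apply_not_mem _ hyZ]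
  -- φ₀ maps Lc into the characteristic subalgebra
  have hmem : ∀ f ∈ lcSubalgebra (UltrafilterSpace 𝒟) R, φ₀ f ∈ charSubalgebra Y R 𝒟 := by
    intro f hf
    have hspan := lc_mem_span hempty hunion hinter hdiff hf
    clear hf
    induction hspan using Submodule.span_induction with
    | mem x hx =>
      obtain ⟨Z, hZ, rfl⟩ := hx
      rw [hkey Z hZ]
      exact NonUnitalAlgebra.subset_adjoin R ⟨Z, hZ, rfl⟩
    | zero => rw [hzero]; exact zero_mem _
    | add x y hx hy hx' hy' => rw [hadd]; exact add_mem hx' hy'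
    | smul r x hx hx' => rw [hsmul]; exact SMulMemClass.smul_mem r hx'
  -- the homomorphism
  set φ : lcSubalgebra (UltrafilterSpace 𝒟) R →ₙₐ[R] charSubalgebra Y R 𝒟 :=
    { toFun := fun f => ⟨φ₀ f.1, hmem f.1 f.2⟩
      map_add' := fun f g => Subtype.ext (by exact hadd f.1 g.1)
      map_zero' := Subtype.ext (by exact hzero)
      map_smul' := fun r f => Subtype.ext (by exact hsmul r f.1)
      map_mul' := fun f g => Subtype.ext (by exact hmul f.1 g.1) } with hφdef
  have hφcoe : ∀ f : lcSubalgebra (UltrafilterSpace 𝒟) R, (φ f : Y → R) = φ₀ f.1 :=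
    fun f => rfl
  refine ⟨φ, ⟨?_, ?_⟩, ?_⟩
  · -- injectivity
    have hker : ∀ f : lcSubalgebra (UltrafilterSpace 𝒟) R, φ f = 0 → f = 0 := by
      intro f hf0
      have h0 : φ₀ f.1 = 0 := congrArg Subtype.val hf0
      apply Subtype.ext
      funext ξ
      obtain ⟨U, hUo, hξU, hcst⟩ := f.2.1.exists_open ξ
      obtain ⟨V, ⟨Z, hZD, rfl⟩, hξV, hVU⟩ :=
        (isBasis hinter).exists_subset_of_mem_open hξU hUo
      obtain ⟨y, hy⟩ := nonempty_of_mem ξ hξV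
      have hcy : ∃ Z' ∈ 𝒟, y ∈ Z' := ⟨Z, hZD, hy⟩
      have hprinc : (⟨{Z' ∈ 𝒟 | y ∈ Z'}, principal_isUltrafilter hinter hdiff hcy⟩ :
          UltrafilterSpace 𝒟) ∈ basicSet 𝒟 Z := ⟨hZD, hy⟩
      have h1 : f.1 ξ = f.1 ⟨{Z' ∈ 𝒟 | y ∈ Z'}, principal_isUltrafilter hinter hdiff hcy⟩ :=
        (hcst _ (hVU hprinc)).symm
      have h2 : φ₀ f.1 y = f.1 ⟨{Z' ∈ 𝒟 | y ∈ Z'}, principal_isUltrafilter hinter hdiff hcy⟩ := by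
        simp [hφ₀, hcy]
      have h3 : φ₀ f.1 y = 0 := by rw [h0]; rfl
      show f.1 ξ = 0
      rw [h1, ← h2, h3]
    intro f g hfg
    have : φ (f - g) = 0 := by rw [map_sub, hfg, sub_self]
    have := hker _ this
    exact sub_eq_zero.mp (by exact_mod_cast this)
  · -- surjectivity
    rintro ⟨x, hx⟩
    have : ∃ f : lcSubalgebra (UltrafilterSpace 𝒟) R, φ₀ f.1 = x := by
      induction hx using NonUnitalAlgebra.adjoin_induction with
      | mem x hx =>
        obtain ⟨C, hC, rfl⟩ := hx
        exact ⟨⟨charFun R (basicSet 𝒟 C),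
          charFun_basicSet_mem_lc hempty hunion hinter hdiff hC⟩, hkey C hC⟩
      | add x y hx hy hx' hy' =>
        obtain ⟨f₁, hf₁⟩ := hx'
        obtain ⟨f₂, hf₂⟩ := hy'
        exact ⟨f₁ + f₂, by rw [show ((f₁ + f₂ : lcSubalgebra (UltrafilterSpace 𝒟) R) :
          UltrafilterSpace 𝒟 → R) = f₁.1 + f₂.1 from rfl, hadd, hf₁, hf₂]⟩
      | zero => exact ⟨0, by rw [show ((0 : lcSubalgebra (UltrafilterSpace 𝒟) R) :
          UltrafilterSpace 𝒟 → R) = 0 from rfl, hzero]⟩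
      | mul x y hx hy hx' hy' =>
        obtain ⟨f₁, hf₁⟩ := hx'
        obtain ⟨f₂, hf₂⟩ := hy'
        exact ⟨f₁ * f₂, by rw [show ((f₁ * f₂ : lcSubalgebra (UltrafilterSpace 𝒟) R) :
          UltrafilterSpace 𝒟 → R) = f₁.1 * f₂.1 from rfl, hmul, hf₁, hf₂]⟩
      | smul r x hx hx' =>
        obtain ⟨f₁, hf₁⟩ := hx'
        exact ⟨r • f₁, by rw [show ((r • f₁ : lcSubalgebra (UltrafilterSpace 𝒟) R) :
          UltrafilterSpace 𝒟 → R) = r • f₁.1 from rfl, hsmul, hf₁]⟩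
    obtain ⟨f, hf⟩ := this
    exact ⟨f, Subtype.ext (by rw [hφcoe, hf])⟩
  · -- the key formula
    intro Z hZ
    refine ⟨charFun_basicSet_mem_lc hempty hunion hinter hdiff hZ, ?_⟩
    rw [hφcoe]
    exact hkey Z hZ
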